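/- Let X and Y be finite types, A : Matrix X Y ℝ, and r : ℕ. Then there exist maps q : X → (Fin r → ℝ) and k : Y → (Fin r → ℝ) such that, for the matrix M defined by M(x,y) := Σ_{i < r} q(x)(i)·k(y)(i) (the dot product of q(x) and k(y)), we have rank(M) ≤ r and for every matrix B : Matrix X Y ℝ with rank(B) ≤ r, the Frobenius norm satisfies ‖A − M‖_F ≤ ‖A − B‖_F. -/

import Mathlib

open Finset

lemma euclid_abs_apply_le_norm {X : Type*} [Fintype X] (v : EuclideanSpace ℝ X) (x : X) :
    |v x| ≤ ‖v‖ := by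
  rw [EuclideanSpace.norm_eq, ← Real.sqrt_sq_eq_abs]
  apply Real.sqrt_le_sqrt
  have := Finset.single_le_sum (f := fun i => ‖v i‖ ^ 2) (fun i _ => sq_nonneg _)
    (Finset.mem_univ x)
  simpa [Real.norm_eq_abs, sq_abs] using this

lemma factor_of_rank_le {X Y : Type*} [Fintype X] [Fintype Y]
    (B : Matrix X Y ℝ) (r : ℕ) (hr : B.rank ≤ r) (c : ℝ)
    (hc0 : 0 ≤ c)
    (hc : ∀ y, Real.sqrt (∑ x, (B x y) ^ 2) ≤ c) :
    ∃ (q : X → Fin r → ℝ) (k : Y → Fin r → ℝ),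
      (∀ x i, |q x i| ≤ 1) ∧ (∀ y i, |k y i| ≤ c) ∧
      ∀ x y, B x y = ∑ i, q x i * k y i := by
  classical
  set col : Y → EuclideanSpace ℝ X := fun y => WithLp.toLp 2 (fun x => B x y) with hcol
  set W : Submodule ℝ (EuclideanSpace ℝ X) := Submodule.span ℝ (Set.range col) with hW
  have hrank : B.rank = Module.finrank ℝ W := by
    rw [Matrix.rank_eq_finrank_span_cols]
    have hspan : Submodule.span ℝ (Set.range B.col) = W.map ((EuclideanSpace.equiv X ℝ).toLinearEquiv : EuclideanSpace ℝ X →ₗ[ℝ] (X → ℝ)) := by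
      rw [hW, Submodule.map_span, ← Set.range_comp]
      rfl
    rw [hspan, LinearEquiv.finrank_map_eq]
  set d := Module.finrank ℝ W with hd
  have hdr : d ≤ r := by rw [← hrank] at *; omega
  have hmem : ∀ y, col y ∈ W := fun y => Submodule.subset_span (Set.mem_range_self y)
  set w : Y → W := fun y => ⟨col y, hmem y⟩ with hw
  set b := stdOrthonormalBasis ℝ W with hb
  have hnorm : ∀ j : Fin d, ‖(b j : EuclideanSpace ℝ X)‖ = 1 := by
    intro j
    rw [Submodule.norm_coe]
    exact b.orthonormal.1 j
  refine ⟨fun x i => if h : (i : ℕ) < d then ((b ⟨i, h⟩ : EuclideanSpace ℝ X) x) else 0,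
          fun y i => if h : (i : ℕ) < d then inner (𝕜 := ℝ) (b ⟨i, h⟩) (w y) else 0,
          ?_, ?_, ?_⟩
  · intro x i
    by_cases h : (i : ℕ) < d
    · simp only [dif_pos h]
      calc |(b ⟨i, h⟩ : EuclideanSpace ℝ X) x| ≤ ‖(b ⟨i, h⟩ : EuclideanSpace ℝ X)‖ :=
            euclid_abs_apply_le_norm _ _
        _ = 1 := hnorm _
    · simp [dif_neg h]
  · intro y i
    by_cases h : (i : ℕ) < d
    · simp only [dif_pos h]
      have h1 : |inner (𝕜 := ℝ) (b ⟨i, h⟩) (w y)| ≤ ‖b ⟨i, h⟩‖ * ‖w y‖ :=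
        abs_real_inner_le_norm _ _
      have h2 : ‖b ⟨i, h⟩‖ = 1 := b.orthonormal.1 _
      have h3 : ‖w y‖ = Real.sqrt (∑ x, (B x y) ^ 2) := by
        rw [← Submodule.norm_coe]
        rw [show ((w y : W) : EuclideanSpace ℝ X) = col y from rfl]
        rw [EuclideanSpace.norm_eq]
        congr 1
        refine Finset.sum_congr rfl fun x _ => ?_
        simp [Real.norm_eq_abs, sq_abs, hcol]
      rw [h2, one_mul, h3] at h1
      exact h1.trans (hc y)
    · simpa [dif_neg h] using hc0
  · intro x y
    have hrepr := b.sum_repr' (w y)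
    have hco : (∑ j, inner (𝕜 := ℝ) (b j) (w y) • ((b j : EuclideanSpace ℝ X))) = col y := by
      have := congrArg (Submodule.subtype W) hrepr
      simpa [map_sum] using this
    have hcox := congrFun (congrArg (fun v : EuclideanSpace ℝ X => (v : X → ℝ)) hco) x
    have hsum : (∑ j, inner (𝕜 := ℝ) (b j) (w y) • ((b j : EuclideanSpace ℝ X))) x
        = ∑ j, inner (𝕜 := ℝ) (b j) (w y) * ((b j : EuclideanSpace ℝ X) x) := by
      rw [WithLp.ofLp_sum, Finset.sum_apply]
      rfl
    have key : ∑ j : Fin d, inner (𝕜 := ℝ) (b j) (w y) * ((b j : EuclideanSpace ℝ X) x) = B x y := by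
      rw [← hsum]
      exact hcox
    rw [← key]
    -- convert sum over Fin r to sum over Fin d
    rw [Fin.sum_univ_eq_sum_range
      (fun i => (if h : i < d then ((b ⟨i, h⟩ : EuclideanSpace ℝ X) x) else 0) *
        (if h : i < d then inner (𝕜 := ℝ) (b ⟨i, h⟩) (w y) else 0)) r]
    rw [← Finset.sum_subset (Finset.range_subset_range.2 hdr)
      (fun i _ hi => by simp [Finset.mem_range.not.mp hi])]
    rw [← Fin.sum_univ_eq_sum_range
      (fun i => (if h : i < d then ((b ⟨i, h⟩ : EuclideanSpace ℝ X) x) else 0) *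
        (if h : i < d then inner (𝕜 := ℝ) (b ⟨i, h⟩) (w y) else 0)) d]
    refine Finset.sum_congr rfl fun j _ => ?_
    rw [dif_pos j.isLt, dif_pos j.isLt, mul_comm]


/-- **Optimal dot-product form via SVD (Eckart–Young–Mirsky, Frobenius norm).**
For any real matrix `A` and any rank budget `r`, there exist query/key maps
`q : X → ℝ^r` and `k : Y → ℝ^r` such that the dot-product matrix
`M x y = Σ_i q x i * k y i` has rank at most `r` and is a Frobenius-optimal
rank-`r` approximation of `A`. -/
theorem eckart_young_dot_product_form
    {X Y : Type*} [Fintype X] [Fintype Y] [DecidableEq X] [DecidableEq Y]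
    (A : Matrix X Y ℝ) (r : ℕ) :
    ∃ (q : X → Fin r → ℝ) (k : Y → Fin r → ℝ),
      (Matrix.of fun x y => ∑ i, q x i * k y i).rank ≤ r ∧
      ∀ B : Matrix X Y ℝ, B.rank ≤ r →
        Real.sqrt (∑ x, ∑ y, (A x y - ∑ i, q x i * k y i) ^ 2)
          ≤ Real.sqrt (∑ x, ∑ y, (A x y - B x y) ^ 2) := by
  classical
  set S2 : ℝ := ∑ x, ∑ y, (A x y) ^ 2 with hS2def
  have hS2 : 0 ≤ S2 := by positivity
  set c : ℝ := max 1 (Real.sqrt (4 * S2)) with hcdef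
  have hc1 : (1 : ℝ) ≤ c := le_max_left _ _
  have hc0 : (0 : ℝ) ≤ c := le_trans zero_le_one hc1
  set f : (X → Fin r → ℝ) × (Y → Fin r → ℝ) → ℝ :=
    fun p => ∑ x, ∑ y, (A x y - ∑ i, p.1 x i * p.2 y i) ^ 2 with hfdef
  have hf : Continuous f := by
    apply continuous_finset_sum; intro x _
    apply continuous_finset_sum; intro y _
    apply Continuous.pow
    apply Continuous.sub continuous_const
    apply continuous_finset_sum; intro i _
    fun_prop
  set K : Set ((X → Fin r → ℝ) × (Y → Fin r → ℝ)) :=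
    (Set.univ.pi fun _ : X => Set.univ.pi fun _ : Fin r => Set.Icc (-c) c) ×ˢ
    (Set.univ.pi fun _ : Y => Set.univ.pi fun _ : Fin r => Set.Icc (-c) c) with hKdef
  have hKc : IsCompact K :=
    (isCompact_univ_pi fun _ => isCompact_univ_pi fun _ => isCompact_Icc).prod
    (isCompact_univ_pi fun _ => isCompact_univ_pi fun _ => isCompact_Icc)
  have hmemK : ∀ p : (X → Fin r → ℝ) × (Y → Fin r → ℝ),
      (∀ x i, |p.1 x i| ≤ c) → (∀ y i, |p.2 y i| ≤ c) → p ∈ K := by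
    intro p h1 h2
    constructor
    · intro x _ ; intro i _ ; exact abs_le.mp (h1 x i)
    · intro y _ ; intro i _ ; exact abs_le.mp (h2 y i)
  have hne : K.Nonempty := ⟨(fun _ _ => 0, fun _ _ => 0), hmemK _ (fun _ _ => by simpa using hc0) (fun _ _ => by simpa using hc0)⟩
  obtain ⟨p, hpK, hmin⟩ := hKc.exists_isMinOn hne hf.continuousOn
  refine ⟨p.1, p.2, ?_, ?_⟩
  · have : (Matrix.of fun x y => ∑ i, p.1 x i * p.2 y i)
        = (Matrix.of fun x i => p.1 x i) * (Matrix.of fun (i : Fin r) y => p.2 y i) := by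
      ext x y
      simp [Matrix.mul_apply]
    rw [this]
    calc ((Matrix.of fun x i => p.1 x i) * (Matrix.of fun (i : Fin r) y => p.2 y i)).rank
        ≤ (Matrix.of fun (i : Fin r) y => p.2 y i).rank := Matrix.rank_mul_le_right _ _
      _ ≤ Fintype.card (Fin r) := Matrix.rank_le_card_height _
      _ = r := Fintype.card_fin r
  · intro B hB
    apply Real.sqrt_le_sqrt
    rcases le_total S2 (∑ x, ∑ y, (A x y - B x y) ^ 2) with hcase | hcase
    · have h0 : f p ≤ f (fun _ _ => 0, fun _ _ => 0) :=
        hmin (hmemK _ (fun _ _ => by simpa using hc0) (fun _ _ => by simpa using hc0))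
      simp only [hfdef] at h0
      calc (∑ x, ∑ y, (A x y - ∑ i, p.1 x i * p.2 y i) ^ 2)
          ≤ ∑ x, ∑ y, (A x y - ∑ i, (0:ℝ) * (0:ℝ)) ^ 2 := h0
        _ = S2 := by simp [hS2def]
        _ ≤ _ := hcase
    · -- B is not too big; factor it
      have hBsmall : ∀ y, Real.sqrt (∑ x, (B x y) ^ 2) ≤ c := by
        intro y
        refine le_trans (Real.sqrt_le_sqrt ?_) (le_max_right _ _)
        have h1 : (∑ x, (B x y) ^ 2) ≤ ∑ x, ∑ y', (B x y') ^ 2 := by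
          apply Finset.sum_le_sum
          intro x _
          exact Finset.single_le_sum (f := fun y' => (B x y') ^ 2)
            (fun _ _ => sq_nonneg _) (Finset.mem_univ y)
        have h2 : (∑ x, ∑ y', (B x y') ^ 2)
            ≤ ∑ x, ∑ y', (2 * (A x y') ^ 2 + 2 * (A x y' - B x y') ^ 2) := by
          apply Finset.sum_le_sum; intro x _
          apply Finset.sum_le_sum; intro y' _
          nlinarith [sq_nonneg (2 * A x y' - B x y')]
        have h3 : (∑ x, ∑ y', (2 * (A x y') ^ 2 + 2 * (A x y' - B x y') ^ 2))
            = 2 * S2 + 2 * (∑ x, ∑ y', (A x y' - B x y') ^ 2) := by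
          simp [Finset.sum_add_distrib, Finset.mul_sum, hS2def]
        linarith
      obtain ⟨qB, kB, hqB, hkB, hfac⟩ := factor_of_rank_le B r hB c hc0 hBsmall
      have hmemB : (qB, kB) ∈ K := hmemK _ (fun x i => (hqB x i).trans hc1) hkB
      have h0 : f p ≤ f (qB, kB) := hmin hmemB
      simp only [hfdef] at h0
      calc (∑ x, ∑ y, (A x y - ∑ i, p.1 x i * p.2 y i) ^ 2)
          ≤ ∑ x, ∑ y, (A x y - ∑ i, qB x i * kB y i) ^ 2 := h0
        _ = ∑ x, ∑ y, (A x y - B x y) ^ 2 := by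
            refine Finset.sum_congr rfl fun x _ => Finset.sum_congr rfl fun y _ => ?_
            rw [← hfac x y]
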